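/- Let U ⊆ ℂ^m be open, let z : U → ℂ be real-differentiable with Ψ̃(q, z(q)) = 0 for all q ∈ U, and let q₀ ∈ U with ∂Ψ̃/∂ζ(q₀, z(q₀)) ≠ 0. Then the real directional derivative of z at q₀ along the radial vector q₀ vanishes, i.e. (fderiv ℝ z q₀)(q₀) = 0, if and only if Σ_{i=1}^m w^i(q₀, z(q₀)) · (∂Ψ/∂w^i)(w(q₀, z(q₀)), z(q₀)) = 0, where ∂Ψ/∂w^i denotes the complex partial derivative of Ψ with respect to its i-th first-group variable. -/

import Mathlib

open Matrix

/-- Lemma 4.1 of the paper (pointwise form). For a real-differentiable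
solution `z` of `Ψ̃(q, z(q)) = Ψ(q − M(z(q))·q̄, z(q)) = 0` with nonvanishing
`ζ`-derivative at `q₀`, the radial directional derivative `(fderiv ℝ z q₀)(q₀)`
vanishes iff `Σᵢ wⁱ(q₀, z(q₀)) · (∂Ψ/∂wⁱ)` vanishes at `(w(q₀, z(q₀)), z(q₀))`. -/
theorem radial_invariance_iff_euler_sum
    (m : ℕ) (hm : 2 ≤ m)
    (M : ℂ → Matrix (Fin m) (Fin m) ℂ)
    (hM : ∀ i j, Differentiable ℂ (fun ζ => M ζ i j))
    (hManti : ∀ ζ, (M ζ)ᵀ = -(M ζ))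
    (Ψ : ((Fin m → ℂ) × ℂ) → ℂ) (hΨ : Differentiable ℂ Ψ)
    (U : Set (Fin m → ℂ)) (hU : IsOpen U)
    (z : (Fin m → ℂ) → ℂ) (hz : DifferentiableOn ℝ z U)
    (hsol : ∀ q ∈ U, Ψ (q - (M (z q)).mulVec (star q), z q) = 0)
    (q₀ : Fin m → ℂ) (hq₀ : q₀ ∈ U)
    (hreg : deriv (fun ζ => Ψ (q₀ - (M ζ).mulVec (star q₀), ζ)) (z q₀) ≠ 0) :
    fderiv ℝ z q₀ q₀ = 0 ↔
      ∑ i, (q₀ - (M (z q₀)).mulVec (star q₀)) i *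
        fderiv ℂ Ψ (q₀ - (M (z q₀)).mulVec (star q₀), z q₀) (Pi.single i 1, 0) = 0 := by
  classical
  have hzq : DifferentiableAt ℝ z q₀ := hz.differentiableAt (hU.mem_nhds hq₀)
  set ζ₀ := z q₀ with hζ₀
  set η := fderiv ℝ z q₀ q₀ with hηdef
  set c : ℂ → (Fin m → ℂ) := fun ζ => q₀ - (M ζ).mulVec (star q₀) with hcdef
  -- differentiability of c
  have hc : Differentiable ℂ c := by
    apply Differentiable.const_sub
    have h1 : (fun ζ => (M ζ).mulVec (star q₀)) = fun ζ i => ∑ j, M ζ i j * star (q₀ j) := by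
      funext ζ i; simp [Matrix.mulVec, dotProduct]
    rw [h1, differentiable_pi]
    intro i
    apply Differentiable.fun_sum
    intro j _
    exact (hM i j).mul (differentiable_const _)
  set c' : Fin m → ℂ := deriv c ζ₀ with hc'def
  have hc' : HasDerivAt c c' ζ₀ := (hc ζ₀).hasDerivAt
  set w₀ : Fin m → ℂ := q₀ - (M ζ₀).mulVec (star q₀) with hw₀
  set p₀ : (Fin m → ℂ) × ℂ := (w₀, ζ₀) with hp₀
  have hcw : c ζ₀ = w₀ := rfl
  set A := fderiv ℂ Ψ p₀ (c', 1) with hAdef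
  -- A is the deriv appearing in hreg
  have hA : HasDerivAt (fun ζ => Ψ (c ζ, ζ)) A ζ₀ := by
    have h1 : HasDerivAt (fun ζ => (c ζ, ζ)) (c', 1) ζ₀ := hc'.prodMk (hasDerivAt_id ζ₀)
    exact (hΨ p₀).hasFDerivAt.comp_hasDerivAt_of_eq ζ₀ h1 (by rw [hcw])
  have hAne : A ≠ 0 := by
    have h : deriv (fun ζ => Ψ (q₀ - (M ζ).mulVec (star q₀), ζ)) ζ₀ = A := hA.deriv
    rw [← h]; exact hreg
  -- the radial curve
  have e0 : ((1:ℝ) + 0) • q₀ = q₀ := by norm_num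
  have hcurve : HasDerivAt (fun t : ℝ => (1 + t) • q₀) q₀ 0 := by
    have h1 : HasDerivAt (fun t : ℝ => 1 + t) 1 0 := (hasDerivAt_id 0).const_add 1
    simpa using h1.smul_const q₀
  have hγ : HasDerivAt (fun t : ℝ => z ((1 + t) • q₀)) η 0 :=
    hzq.hasFDerivAt.comp_hasDerivAt_of_eq 0 hcurve (by rw [e0])
  -- the inner vector curve
  have hγc : HasDerivAt (fun t : ℝ => c (z ((1 + t) • q₀))) (η • c') 0 :=
    hc'.scomp_of_eq 0 hγ (by rw [e0])
  have hsm : HasDerivAt (fun t : ℝ => (1 + t) • c (z ((1 + t) • q₀))) (w₀ + η • c') 0 := by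
    have h1 : HasDerivAt (fun t : ℝ => 1 + t) 1 0 := (hasDerivAt_id 0).const_add 1
    have h2 := h1.smul hγc
    have h3 : ((1:ℝ) + 0) • (η • c') + (1:ℝ) • c (z ((1 + 0:ℝ) • q₀)) = w₀ + η • c' := by
      rw [e0, hcw]; simp [add_comm]
    rw [← h3]; exact h2
  -- the pair curve
  have hρ : HasDerivAt (fun t : ℝ => ((1 + t) • c (z ((1 + t) • q₀)), z ((1 + t) • q₀)))
      ((w₀ + η • c', η) : (Fin m → ℂ) × ℂ) 0 := hsm.prodMk hγ
  -- composite with Ψ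
  have hcomp : HasDerivAt
      (fun t : ℝ => Ψ ((1 + t) • c (z ((1 + t) • q₀)), z ((1 + t) • q₀)))
      (((fderiv ℂ Ψ p₀).restrictScalars ℝ) (w₀ + η • c', η)) 0 := by
    have hL : HasFDerivAt Ψ ((fderiv ℂ Ψ p₀).restrictScalars ℝ) p₀ :=
      (hΨ p₀).hasFDerivAt.restrictScalars ℝ
    refine hL.comp_hasDerivAt_of_eq 0 hρ ?_
    rw [e0, hcw]; simp; rfl
  -- the composite is eventually zero
  have hz0 : (fun t : ℝ => Ψ ((1 + t) • c (z ((1 + t) • q₀)), z ((1 + t) • q₀)))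
      =ᶠ[nhds 0] (fun _ => (0:ℂ)) := by
    have hcont : ContinuousAt (fun t : ℝ => (1 + t) • q₀) 0 := by fun_prop
    have hmem : ∀ᶠ t : ℝ in nhds 0, (1 + t) • q₀ ∈ U := by
      have := hcont.preimage_mem_nhds (by rw [e0]; exact hU.mem_nhds hq₀)
      filter_upwards [this] with t ht using ht
    filter_upwards [hmem] with t ht
    have key : (1 + t : ℝ) • c (z ((1 + t) • q₀))
        = ((1 + t) • q₀) - (M (z ((1 + t) • q₀))).mulVec (star ((1 + t) • q₀)) := by
      have hstar : star ((1 + t : ℝ) • q₀) = (1 + t : ℝ) • star q₀ := by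
        funext j; simp [Pi.smul_apply, star_smul]
      rw [hcdef]
      rw [hstar, Matrix.mulVec_smul, smul_sub]
    rw [key]
    exact hsol _ ht
  -- derivative of eventually-zero function is zero
  have hzero : ((fderiv ℂ Ψ p₀).restrictScalars ℝ) (w₀ + η • c', η) = 0 := by
    have h0 : HasDerivAt (fun _ : ℝ => (0:ℂ))
        (((fderiv ℂ Ψ p₀).restrictScalars ℝ) (w₀ + η • c', η)) 0 :=
      hcomp.congr_of_eventuallyEq hz0.symm
    have h1 : HasDerivAt (fun _ : ℝ => (0:ℂ)) 0 (0:ℝ) := hasDerivAt_const 0 0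
    exact h0.unique h1
  -- rewrite the derivative value
  have hsplit : fderiv ℂ Ψ p₀ (w₀, (0:ℂ)) + η * A = 0 := by
    have : ((w₀ + η • c', η) : (Fin m → ℂ) × ℂ) = (w₀, (0:ℂ)) + η • ((c', (1:ℂ))) := by
      ext <;> simp
    have hzero' : fderiv ℂ Ψ p₀ (w₀ + η • c', η) = 0 := hzero
    rw [this, map_add, (fderiv ℂ Ψ p₀).map_smul, smul_eq_mul] at hzero'
    exact hzero'
  -- expand the first term as a sum
  have hsum : fderiv ℂ Ψ p₀ (w₀, (0:ℂ))
      = ∑ i, w₀ i * fderiv ℂ Ψ p₀ (Pi.single i 1, 0) := by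
    have hdecomp : ((w₀, (0:ℂ)) : (Fin m → ℂ) × ℂ)
        = ∑ i, w₀ i • ((Pi.single i 1 : Fin m → ℂ), (0:ℂ)) := by
      ext j
      · simp [Prod.fst_sum, Finset.sum_apply, Pi.single_apply]
      · simp [Prod.snd_sum]
    rw [hdecomp, map_sum]
    refine Finset.sum_congr rfl fun i _ => ?_
    rw [(fderiv ℂ Ψ p₀).map_smul, smul_eq_mul]
  -- finish
  have hgoal : ∑ i, w₀ i * fderiv ℂ Ψ p₀ (Pi.single i 1, 0) + η * A = 0 := by
    rw [← hsum]; exact hsplit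
  constructor
  · intro hη0
    rw [hη0] at hgoal; simpa using hgoal
  · intro hS
    rw [hS, zero_add] at hgoal
    exact (mul_eq_zero.mp hgoal).resolve_right hAne
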